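/- Two compatible spark complexes have naturally isomorphic groups of spark classes in every degree. -/

import Mathlib

section SparkMachinery

variable (Fb : ℤ → Type) [∀ k, AddCommGroup (Fb k)]
  (d : ∀ k : ℤ, Fb k →+ Fb (k + 1))
  (E Fs I : ∀ k : ℤ, AddSubgroup (Fb k))

/-- The sparks of degree `k+1` of the spark complex `(Fs, E, I)` sitting inside
the ambient complex `F̄`: elements `a ∈ Fs^{k+1}` with `da = φ - r`,
`φ ∈ E^{k+2}`, `r ∈ I^{k+2}`. -/
def sparkSet (k : ℤ) : AddSubgroup (Fb (k + 1)) where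
  carrier := {a | a ∈ Fs (k + 1) ∧
    ∃ φ ∈ E (k + 1 + 1), ∃ r ∈ I (k + 1 + 1), d (k + 1) a = φ - r}
  zero_mem' := ⟨(Fs _).zero_mem, 0, (E _).zero_mem, 0, (I _).zero_mem, by simp⟩
  add_mem' := by
    rintro a b ⟨haF, φ, hφ, r, hr, ha⟩ ⟨hbF, ψ, hψ, t, ht, hb⟩
    exact ⟨(Fs _).add_mem haF hbF, φ + ψ, (E _).add_mem hφ hψ, r + t,
      (I _).add_mem hr ht, by simp only [map_add, ha, hb]; abel⟩
  neg_mem' := by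
    rintro a ⟨haF, φ, hφ, r, hr, ha⟩
    exact ⟨(Fs _).neg_mem haF, -φ, (E _).neg_mem hφ, -r, (I _).neg_mem hr, by
      simp only [map_neg, ha]; abel⟩

/-- The trivial sparks `db + s`, `b ∈ Fs^k`, `s ∈ I^{k+1}`. -/
def trivSet (k : ℤ) : AddSubgroup (Fb (k + 1)) where
  carrier := {a | ∃ b ∈ Fs k, ∃ s ∈ I (k + 1), a = d k b + s}
  zero_mem' := ⟨0, (Fs _).zero_mem, 0, (I _).zero_mem, by simp⟩
  add_mem' := by
    rintro a b ⟨c, hc, s, hs, ha⟩ ⟨c', hc', s', hs', hb⟩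
    exact ⟨c + c', (Fs _).add_mem hc hc', s + s', (I _).add_mem hs hs', by
      simp only [ha, hb, map_add]; abel⟩
  neg_mem' := by
    rintro a ⟨c, hc, s, hs, ha⟩
    exact ⟨-c, (Fs _).neg_mem hc, -s, (I _).neg_mem hs, by
      simp only [ha, map_neg]; abel⟩

/-- The group of spark classes of degree `k+1` of the spark complex
`(Fs, E, I)`. -/
def ClassGrp (k : ℤ) :=
  sparkSet Fb d E Fs I k ⧸
    (trivSet Fb d Fs I k).addSubgroupOf (sparkSet Fb d E Fs I k)

instance (k : ℤ) : AddCommGroup (ClassGrp Fb d E Fs I k) :=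
  QuotientAddGroup.Quotient.addCommGroup _

end SparkMachinery

-- AUX SECTION --
section SparkAux

variable (Fb : ℤ → Type) [∀ k, AddCommGroup (Fb k)]
  (d : ∀ k : ℤ, Fb k →+ Fb (k + 1))
  (E Ib Fs I : ∀ k : ℤ, AddSubgroup (Fb k))

lemma spark_le (hIIb : ∀ k, I k ≤ Ib k) (k : ℤ) :
    sparkSet Fb d E Fs I k ≤ sparkSet Fb d E (fun _ => ⊤) Ib k := by
  rintro a ⟨_, φ, hφ, r, hr, ha⟩
  exact ⟨AddSubgroup.mem_top a, φ, hφ, r, hIIb _ hr, ha⟩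

/-- The induced map from the class group of a subspark complex to the class
group of the ambient spark complex. -/
def toAmb (hFsFb : ∀ k, I k ≤ Ib k) (k : ℤ) :
    ClassGrp Fb d E Fs I k →+ ClassGrp Fb d E (fun _ => ⊤) Ib k :=
  QuotientAddGroup.map _ _
    (AddSubgroup.inclusion (spark_le Fb d E Ib Fs I hFsFb k))
    (by
      rintro ⟨a, ha⟩ h
      rw [AddSubgroup.mem_addSubgroupOf] at h
      obtain ⟨b, hb, s, hs, hab⟩ := h
      simp only [AddSubgroup.mem_comap, AddSubgroup.mem_addSubgroupOf]
      exact ⟨b, AddSubgroup.mem_top b, s, hFsFb _ hs, hab⟩)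

lemma toAmb_mk (hFsFb : ∀ k, I k ≤ Ib k) (k : ℤ) (a : Fb (k+1))
    (ha : a ∈ sparkSet Fb d E Fs I k) :
    toAmb Fb d E Ib Fs I hFsFb k (QuotientAddGroup.mk ⟨a, ha⟩) =
      QuotientAddGroup.mk ⟨a, spark_le Fb d E Ib Fs I hFsFb k ha⟩ := rfl

lemma toAmb_bij
    (hdd : ∀ (k : ℤ) (x : Fb k), d (k + 1) (d k x) = 0)
    (hEFs : ∀ k, E k ≤ Fs k) (hIFs : ∀ k, I k ≤ Fs k)
    (hIIb : ∀ k, I k ≤ Ib k)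
    (hdE : ∀ (k : ℤ) (x : Fb k), x ∈ E k → d k x ∈ E (k + 1))
    (hdIb : ∀ (k : ℤ) (x : Fb k), x ∈ Ib k → d k x ∈ Ib (k + 1))
    (hB : ∀ j : ℤ, 1 ≤ j → ∀ x : Fb j, x ∈ E j → x ∈ Ib j → x = 0)
    (hFinj : ∀ (j : ℤ) (x : Fb (j + 1)), x ∈ Fs (j + 1) → d (j + 1) x = 0 →
      (∃ y : Fb j, d j y = x) → ∃ y ∈ Fs j, d j y = x)
    (hFsurj : ∀ (j : ℤ) (x : Fb (j + 1)), d (j + 1) x = 0 →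
      ∃ e ∈ Fs (j + 1), d (j + 1) e = 0 ∧ ∃ y : Fb j, x - e = d j y)
    (hIinj : ∀ (j : ℤ) (x : Fb (j + 1)), x ∈ I (j + 1) → d (j + 1) x = 0 →
      (∃ y ∈ Ib j, d j y = x) → ∃ y ∈ I j, d j y = x)
    (hIsurj : ∀ (j : ℤ) (x : Fb (j + 1)), x ∈ Ib (j + 1) → d (j + 1) x = 0 →
      ∃ e ∈ I (j + 1), d (j + 1) e = 0 ∧ ∃ y ∈ Ib j, x - e = d j y)
    (k : ℤ) (hk : -1 ≤ k) :
    Function.Bijective (toAmb Fb d E Ib Fs I hIIb k) := by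
  constructor
  · rw [injective_iff_map_eq_zero]
    intro q hq
    induction q using QuotientAddGroup.induction_on with
    | H x =>
      obtain ⟨a, ha⟩ := x
      rw [toAmb_mk] at hq
      replace hq := (QuotientAddGroup.eq_zero_iff _).mp hq
      rw [AddSubgroup.mem_addSubgroupOf] at hq
      obtain ⟨b, -, s, hs, habs0⟩ := hq
      have habs : a = d k b + s := habs0
      obtain ⟨haF, φ, hφ, r, hr, hda⟩ := ha
      -- φ = d s + r ∈ Ib, hence φ = 0
      have hds : d (k+1) a = d (k+1) s := by
        rw [habs]; simp [map_add, hdd]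
      have hφIb : φ ∈ Ib (k+1+1) := by
        have : φ = d (k+1) s + r := by rw [← hds, hda]; abel
        rw [this]
        exact (Ib _).add_mem (hdIb _ _ hs) (hIIb _ hr)
      have hφ0 : φ = 0 := hB (k+1+1) (by omega) φ hφ hφIb
      have hdar : d (k+1) a = -r := by rw [hda, hφ0]; abel
      have hdsr : d (k+1) s = -r := by rw [← hds, hdar]
      -- find t ∈ I (k+1) with d t = -r
      have hrcl : d (k+1+1) (-r) = 0 := by rw [← hdsr, hdd]
      obtain ⟨t, htI, hdt⟩ := hIinj (k+1) (-r) ((I _).neg_mem hr) hrcl ⟨s, hs, hdsr⟩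
      -- s - t is a closed element of Ib (k+1)
      have hstIb : s - t ∈ Ib (k+1) := (Ib _).sub_mem hs (hIIb _ htI)
      have hstcl : d (k+1) (s - t) = 0 := by
        rw [map_sub, hdsr, hdt]; abel
      obtain ⟨e, heI, hecl, w, hwIb, hwe⟩ := hIsurj k (s - t) hstIb hstcl
      -- a - (t + e) = d (b + w)
      have key : a - (t + e) = d k (b + w) := by
        rw [map_add, ← hwe, habs]; abel
      have hmemFs : a - (t + e) ∈ Fs (k+1) :=
        (Fs _).sub_mem haF ((Fs _).add_mem (hIFs _ htI) (hIFs _ heI))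
      have hcl : d (k+1) (a - (t + e)) = 0 := by rw [key, hdd]
      obtain ⟨b', hb'Fs, hdb'⟩ := hFinj k (a - (t+e)) hmemFs hcl ⟨b + w, key.symm⟩
      refine (QuotientAddGroup.eq_zero_iff _).mpr ?_
      rw [AddSubgroup.mem_addSubgroupOf]
      exact ⟨b', hb'Fs, t + e, (I _).add_mem htI heI, by rw [hdb']; abel⟩
  · intro q
    induction q using QuotientAddGroup.induction_on with
    | H x =>
      obtain ⟨a, -, φ, hφ, r, hr, hda⟩ := x
      -- d φ = d r ∈ E ∩ Ib at degree k+3, hence both vanish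
      have h1 : d (k+1+1) φ - d (k+1+1) r = 0 := by
        rw [← map_sub, ← hda, hdd]
      have heq : d (k+1+1) φ = d (k+1+1) r := by
        exact sub_eq_zero.mp h1
      have hφ0 : d (k+1+1) φ = 0 :=
        hB _ (by omega) _ (hdE _ _ hφ) (heq ▸ hdIb _ _ hr)
      have hr0 : d (k+1+1) r = 0 := by rw [← heq, hφ0]
      obtain ⟨r', hr'I, hr'cl, y, hyIb, hyr⟩ := hIsurj (k+1) r hr hr0
      -- φ - r' is closed in Fs and exact in Fb
      have hx : d (k+1) (a + y) = φ - r' := by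
        rw [map_add, hda, ← hyr]; abel
      have hxFs : φ - r' ∈ Fs (k+1+1) := (Fs _).sub_mem (hEFs _ hφ) (hIFs _ hr'I)
      have hxcl : d (k+1+1) (φ - r') = 0 := by rw [map_sub, hφ0, hr'cl]; abel
      obtain ⟨y₂, hy₂Fs, hdy₂⟩ := hFinj (k+1) (φ - r') hxFs hxcl ⟨a + y, hx⟩
      -- a + y - y₂ is closed
      have hcl2 : d (k+1) (a + y - y₂) = 0 := by
        rw [map_sub, hx, hdy₂]; abel
      obtain ⟨e, heFs, hecl, c, hce⟩ := hFsurj k (a + y - y₂) hcl2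
      -- a₂ := y₂ + e is a spark of the subcomplex
      have ha₂ : y₂ + e ∈ sparkSet Fb d E Fs I k :=
        ⟨(Fs _).add_mem hy₂Fs heFs, φ, hφ, r', hr'I, by
          rw [map_add, hdy₂, hecl]; abel⟩
      refine ⟨QuotientAddGroup.mk ⟨y₂ + e, ha₂⟩, ?_⟩
      rw [toAmb_mk]
      refine QuotientAddGroup.eq.mpr ?_
      rw [AddSubgroup.mem_addSubgroupOf]
      refine ⟨c, AddSubgroup.mem_top c, -y, (Ib _).neg_mem hyIb, ?_⟩
      show -(y₂ + e) + a = d k c + -y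
      rw [← hce]; abel

end SparkAux
-- END AUX SECTION --

/-- Two compatible spark complexes — spark complexes
`(F₁, E, I₁)` and `(F₂, E, I₂)` embedded as subspark complexes of a common
spark complex `(F̄, E, Ī)` — have naturally isomorphic groups of spark classes
in every degree, the isomorphism matching classes that are equivalent in the
ambient complex. -/
theorem stmt_12
    (Fb : ℤ → Type) [∀ k, AddCommGroup (Fb k)]
    (d : ∀ k : ℤ, Fb k →+ Fb (k + 1))
    (hdd : ∀ (k : ℤ) (x : Fb k), d (k + 1) (d k x) = 0)
    (E Ib Fs1 I1 Fs2 I2 : ∀ k : ℤ, AddSubgroup (Fb k))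
    -- containments
    (hEFs1 : ∀ k, E k ≤ Fs1 k) (hIFs1 : ∀ k, I1 k ≤ Fs1 k)
    (hEFs2 : ∀ k, E k ≤ Fs2 k) (hIFs2 : ∀ k, I2 k ≤ Fs2 k)
    (hI1Ib : ∀ k, I1 k ≤ Ib k) (hI2Ib : ∀ k, I2 k ≤ Ib k)
    -- closure under the differential
    (hdE : ∀ (k : ℤ) (x : Fb k), x ∈ E k → d k x ∈ E (k + 1))
    (hdIb : ∀ (k : ℤ) (x : Fb k), x ∈ Ib k → d k x ∈ Ib (k + 1))
    (hdFs1 : ∀ (k : ℤ) (x : Fb k), x ∈ Fs1 k → d k x ∈ Fs1 (k + 1))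
    (hdI1 : ∀ (k : ℤ) (x : Fb k), x ∈ I1 k → d k x ∈ I1 (k + 1))
    (hdFs2 : ∀ (k : ℤ) (x : Fb k), x ∈ Fs2 k → d k x ∈ Fs2 (k + 1))
    (hdI2 : ∀ (k : ℤ) (x : Fb k), x ∈ I2 k → d k x ∈ I2 (k + 1))
    -- Axiom (A): `E → F̄` induces an isomorphism on cohomology
    (hAinj : ∀ (j : ℤ) (e : Fb (j + 1)), e ∈ E (j + 1) → d (j + 1) e = 0 →
      (∃ y : Fb j, d j y = e) → ∃ y ∈ E j, d j y = e)
    (hAsurj : ∀ (j : ℤ) (x : Fb (j + 1)), d (j + 1) x = 0 →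
      ∃ e ∈ E (j + 1), d (j + 1) e = 0 ∧ ∃ y : Fb j, x - e = d j y)
    -- Axiom (B) for the ambient complex (hence for both subcomplexes)
    (hB : ∀ j : ℤ, 1 ≤ j → ∀ x : Fb j, x ∈ E j → x ∈ Ib j → x = 0)
    -- `H^*(F₁) ≅ H^*(F̄)` and `H^*(F₂) ≅ H^*(F̄)` via the inclusions
    (hF1inj : ∀ (j : ℤ) (x : Fb (j + 1)), x ∈ Fs1 (j + 1) → d (j + 1) x = 0 →
      (∃ y : Fb j, d j y = x) → ∃ y ∈ Fs1 j, d j y = x)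
    (hF1surj : ∀ (j : ℤ) (x : Fb (j + 1)), d (j + 1) x = 0 →
      ∃ e ∈ Fs1 (j + 1), d (j + 1) e = 0 ∧ ∃ y : Fb j, x - e = d j y)
    (hF2inj : ∀ (j : ℤ) (x : Fb (j + 1)), x ∈ Fs2 (j + 1) → d (j + 1) x = 0 →
      (∃ y : Fb j, d j y = x) → ∃ y ∈ Fs2 j, d j y = x)
    (hF2surj : ∀ (j : ℤ) (x : Fb (j + 1)), d (j + 1) x = 0 →
      ∃ e ∈ Fs2 (j + 1), d (j + 1) e = 0 ∧ ∃ y : Fb j, x - e = d j y)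
    -- `H^*(I₁) ≅ H^*(Ī)` and `H^*(I₂) ≅ H^*(Ī)` via the inclusions
    (hI1inj : ∀ (j : ℤ) (x : Fb (j + 1)), x ∈ I1 (j + 1) → d (j + 1) x = 0 →
      (∃ y ∈ Ib j, d j y = x) → ∃ y ∈ I1 j, d j y = x)
    (hI1surj : ∀ (j : ℤ) (x : Fb (j + 1)), x ∈ Ib (j + 1) → d (j + 1) x = 0 →
      ∃ e ∈ I1 (j + 1), d (j + 1) e = 0 ∧ ∃ y ∈ Ib j, x - e = d j y)
    (hI2inj : ∀ (j : ℤ) (x : Fb (j + 1)), x ∈ I2 (j + 1) → d (j + 1) x = 0 →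
      (∃ y ∈ Ib j, d j y = x) → ∃ y ∈ I2 j, d j y = x)
    (hI2surj : ∀ (j : ℤ) (x : Fb (j + 1)), x ∈ Ib (j + 1) → d (j + 1) x = 0 →
      ∃ e ∈ I2 (j + 1), d (j + 1) e = 0 ∧ ∃ y ∈ Ib j, x - e = d j y)
    (k : ℤ) (hk : -1 ≤ k) :
    ∃ e : ClassGrp Fb d E Fs1 I1 k ≃+ ClassGrp Fb d E Fs2 I2 k,
      ∀ (a : Fb (k + 1)) (h1 : a ∈ sparkSet Fb d E Fs1 I1 k)
        (b : Fb (k + 1)) (h2 : b ∈ sparkSet Fb d E Fs2 I2 k),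
        (e (QuotientAddGroup.mk ⟨a, h1⟩) = QuotientAddGroup.mk ⟨b, h2⟩ ↔
          ∃ c : Fb k, ∃ s ∈ Ib (k + 1), a - b = d k c + s) := by
  refine ⟨(AddEquiv.ofBijective _ (toAmb_bij Fb d E Ib Fs1 I1 hdd hEFs1 hIFs1
      hI1Ib hdE hdIb hB hF1inj hF1surj hI1inj hI1surj k hk)).trans
    (AddEquiv.ofBijective _ (toAmb_bij Fb d E Ib Fs2 I2 hdd hEFs2 hIFs2
      hI2Ib hdE hdIb hB hF2inj hF2surj hI2inj hI2surj k hk)).symm, ?_⟩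
  intro a h1 b h2
  change (AddEquiv.ofBijective (toAmb Fb d E Ib Fs2 I2 hI2Ib k) (toAmb_bij Fb d E Ib Fs2 I2
        hdd hEFs2 hIFs2 hI2Ib hdE hdIb hB hF2inj hF2surj hI2inj hI2surj k hk)).symm
      (AddEquiv.ofBijective (toAmb Fb d E Ib Fs1 I1 hI1Ib k) (toAmb_bij Fb d E Ib Fs1 I1
        hdd hEFs1 hIFs1 hI1Ib hdE hdIb hB hF1inj hF1surj hI1inj hI1surj k hk)
        (QuotientAddGroup.mk ⟨a, h1⟩ : ClassGrp Fb d E Fs1 I1 k)) =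
      (QuotientAddGroup.mk ⟨b, h2⟩ : ClassGrp Fb d E Fs2 I2 k) ↔ _
  refine (AddEquiv.symm_apply_eq _).trans ?_
  show (QuotientAddGroup.mk ⟨a, spark_le Fb d E Ib Fs1 I1 hI1Ib k h1⟩ :
      ClassGrp Fb d E (fun _ => ⊤) Ib k) =
      QuotientAddGroup.mk ⟨b, spark_le Fb d E Ib Fs2 I2 hI2Ib k h2⟩ ↔ _
  refine QuotientAddGroup.eq.trans ?_
  rw [AddSubgroup.mem_addSubgroupOf]
  constructor
  · rintro ⟨c, -, s, hs, h0⟩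
    have h : -a + b = d k c + s := h0
    refine ⟨-c, -s, (Ib _).neg_mem hs, ?_⟩
    have h2 : a - b = -(d k c + s) := by rw [← h]; abel
    rw [h2, map_neg]; abel
  · rintro ⟨c, s, hs, h⟩
    refine ⟨-c, AddSubgroup.mem_top _, -s, (Ib _).neg_mem hs, ?_⟩
    show -a + b = d k (-c) + -s
    have h2 : -a + b = -(d k c + s) := by rw [← h]; abel
    rw [h2, map_neg]; abel
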